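/- arXiv:0912.4904 — 3 statements merged into one kernel-verified Lean document; each statement's English description precedes it below -/
import Mathlib

section
/- Siegel's linear independence criterion: Let θ₁,…,θ_m be real numbers. Assume that for every ε > 0 there exist m+1 linearly independent linear forms L_i(X₀,…,X_m) = Σ_{j=0}^m b_{ij} X_j (i = 0,…,m) with integer coefficients such that max_{0≤i≤m} |L_i(1,θ₁,…,θ_m)| ≤ ε / A^{m-1}, where A = max_{i,j} |b_{ij}|. Then the numbers 1, θ₁, …, θ_m are linearly independent over ℚ. -/
/-- Row-wise Hadamard-type bound for determinants. -/
lemma siegel_det_abs_le {n : ℕ} (M : Matrix (Fin n) (Fin n) ℝ) (r : Fin n → ℝ)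
    (hr : ∀ i j, |M i j| ≤ r i) :
    |M.det| ≤ (n.factorial : ℝ) * ∏ i, r i := by
  have hr0 : ∀ i, 0 ≤ r i := fun i => le_trans (abs_nonneg _) (hr i i)
  rw [Matrix.det_apply]
  calc |∑ σ : Equiv.Perm (Fin n), Equiv.Perm.sign σ • ∏ i, M (σ i) i|
      ≤ ∑ σ : Equiv.Perm (Fin n), |Equiv.Perm.sign σ • ∏ i, M (σ i) i| :=
        Finset.abs_sum_le_sum_abs _ _
    _ ≤ ∑ _σ : Equiv.Perm (Fin n), ∏ i, r i := by
        apply Finset.sum_le_sum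
        intro σ _
        have h1 : |Equiv.Perm.sign σ • ∏ i, M (σ i) i| = |∏ i, M (σ i) i| := by
          rcases Int.units_eq_one_or (Equiv.Perm.sign σ) with h | h <;>
            simp [h, Units.smul_def]
        rw [h1, Finset.abs_prod]
        calc ∏ i, |M (σ i) i| ≤ ∏ i, r (σ i) :=
              Finset.prod_le_prod (fun i _ => abs_nonneg _) (fun i _ => hr _ _)
          _ = ∏ i, r i := Equiv.prod_comp σ r
    _ = (n.factorial : ℝ) * ∏ i, r i := by
        rw [Finset.sum_const, Finset.card_univ, Fintype.card_perm, Fintype.card_fin,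
          nsmul_eq_mul]

/-- If `B` is invertible and `a ≠ 0`, some row replacement by `a` has nonzero det. -/
lemma siegel_exists_updateRow {n : ℕ} (B : Matrix (Fin n) (Fin n) ℚ) (hB : B.det ≠ 0)
    (a : Fin n → ℚ) (ha : a ≠ 0) : ∃ i, (B.updateRow i a).det ≠ 0 := by
  by_contra hc
  push_neg at hc
  have h0 : Matrix.cramer (B.transpose) a = 0 := by
    funext i
    rw [Matrix.cramer_apply, Matrix.updateCol_transpose, Matrix.det_transpose,
      Pi.zero_apply]
    exact hc i
  have h2 := Matrix.mulVec_cramer (B.transpose) a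
  rw [h0, Matrix.mulVec_zero, Matrix.det_transpose] at h2
  apply ha
  funext j
  have := congrFun h2.symm j
  simpa [smul_eq_mul, hB] using this

set_option maxHeartbeats 1000000 in
theorem siegel_linear_independence_criterion (m : ℕ) (θ : Fin m → ℝ)
    (h : ∀ ε : ℝ, 0 < ε → ∃ b : Fin (m + 1) → Fin (m + 1) → ℤ,
      (Matrix.det (fun i j => (b i j : ℚ)) ≠ 0) ∧
      ∀ i : Fin (m + 1),
        |∑ j, (b i j : ℝ) * (Fin.cons 1 θ : Fin (m + 1) → ℝ) j| ≤
          ε / ((Finset.univ.sup' Finset.univ_nonempty fun p : Fin (m + 1) × Fin (m + 1) => |b p.1 p.2| : ℤ) : ℝ) ^ (m - 1)) :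
    LinearIndependent ℚ (Fin.cons 1 θ : Fin (m + 1) → ℝ) := by
  set x : Fin (m + 1) → ℝ := (Fin.cons 1 θ : Fin (m + 1) → ℝ) with hx
  by_contra hli
  rw [Fintype.linearIndependent_iff] at hli
  push_neg at hli
  obtain ⟨g, hg0, j₀, hj₀⟩ := hli
  -- clear denominators
  set d : ℤ := ∏ j, ((g j).den : ℤ) with hd
  have hdpos : 0 < d := Finset.prod_pos fun j _ => Int.natCast_pos.mpr (g j).pos
  have hdvd : ∀ j, ((g j).den : ℤ) ∣ d := fun j => Finset.dvd_prod_of_mem _ (Finset.mem_univ j)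
  set a : Fin (m + 1) → ℤ := fun j => (g j).num * (d / ((g j).den : ℤ)) with haa
  have ha : ∀ j, (a j : ℚ) = g j * d := by
    intro j
    have hden : ((g j).den : ℚ) ≠ 0 := by exact_mod_cast (g j).den_nz
    have h1 : (a j : ℚ) * ((g j).den : ℚ) = g j * d * ((g j).den : ℚ) := by
      have h2 : a j * ((g j).den : ℤ) = (g j).num * d := by
        rw [haa]; ring_nf
        rw [mul_assoc, Int.ediv_mul_cancel (hdvd j)]
      have h3 : (a j : ℚ) * ((g j).den : ℚ) = ((g j).num : ℚ) * (d : ℚ) := by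
        exact_mod_cast congrArg (fun z : ℤ => (z : ℚ)) h2
      have h4 : ((g j).num : ℚ) = g j * ((g j).den : ℚ) :=
        (div_eq_iff hden).mp (Rat.num_div_den (g j))
      rw [h3, h4]; ring
    exact mul_right_cancel₀ hden h1
  have haj₀ : a j₀ ≠ 0 := by
    intro h0
    apply hj₀
    have := ha j₀
    rw [h0] at this
    have hd0 : (d : ℚ) ≠ 0 := by exact_mod_cast hdpos.ne'
    field_simp at this
    simp only [Int.cast_zero] at this
    rcases mul_eq_zero.mp this.symm with h | h <;> tauto
  have hsum : ∑ j, (a j : ℝ) * x j = 0 := by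
    have h1 : ∀ j, (a j : ℝ) = (g j : ℝ) * (d : ℝ) := by
      intro j
      have := ha j
      exact_mod_cast congrArg (fun q : ℚ => (q : ℝ)) this
    calc ∑ j, (a j : ℝ) * x j = (d : ℝ) * ∑ j, (g j : ℝ) * x j := by
          rw [Finset.mul_sum]; exact Finset.sum_congr rfl fun j _ => by rw [h1 j]; ring
      _ = 0 := by
          have : ∑ j, (g j : ℝ) * x j = 0 := by
            simpa [Rat.smul_def] using hg0
          rw [this, mul_zero]
  -- bound on the integer relation coefficients
  set αr : ℝ := ∑ j, |(a j : ℝ)| with hαrdef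
  have hαb : ∀ j, |(a j : ℝ)| ≤ αr := by
    intro j
    rw [hαrdef]
    exact Finset.single_le_sum (f := fun k => |(a k : ℝ)|) (fun k _ => abs_nonneg _)
      (Finset.mem_univ j)
  have hα1 : (1:ℝ) ≤ αr := by
    refine le_trans ?_ (hαb j₀)
    exact_mod_cast Int.one_le_abs haj₀
  have hα0 : (0:ℝ) < αr := lt_of_lt_of_le one_pos hα1
  set ε : ℝ := 1 / (2 * ((m+1).factorial : ℝ) * αr) with hεdef
  have hεpos : 0 < ε := by positivity
  obtain ⟨b, hdet, hbound⟩ := h ε hεpos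
  set A : ℤ := (Finset.univ.sup' Finset.univ_nonempty
    fun p : Fin (m+1) × Fin (m+1) => |b p.1 p.2|) with hA
  have hAb : ∀ i j, |b i j| ≤ A := by
    intro i j
    rw [hA]
    exact Finset.le_sup' (f := fun p : Fin (m+1) × Fin (m+1) => |b p.1 p.2|)
      (Finset.mem_univ (i, j))
  have hA1 : 1 ≤ A := by
    by_contra hc
    push_neg at hc
    have hb0 : ∀ i j, b i j = 0 := by
      intro i j
      have h1 : |b i j| = 0 :=
        le_antisymm (le_trans (hAb i j) (by omega)) (abs_nonneg _)
      exact abs_eq_zero.mp h1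
    apply hdet
    have hzero : (fun i j => ((b i j : ℚ))) = (0 : Matrix (Fin (m+1)) (Fin (m+1)) ℚ) := by
      funext i j; simp [hb0]
    rw [hzero, Matrix.det_zero]
  have hAr1 : (1:ℝ) ≤ (A:ℝ) := by exact_mod_cast hA1
  have hApow : (0:ℝ) < (A:ℝ)^(m-1) := pow_pos (by linarith) _
  -- pick a row to replace by a
  have hacast : (fun j => ((a j : ℚ))) ≠ (0 : Fin (m+1) → ℚ) := by
    intro h0; apply haj₀
    have h1 := congrFun h0 j₀
    simp only [Pi.zero_apply] at h1
    exact_mod_cast h1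
  obtain ⟨i, hi⟩ := siegel_exists_updateRow (Matrix.of fun i j => ((b i j : ℚ))) hdet
    (fun j => (a j : ℚ)) hacast
  set C : Matrix (Fin (m+1)) (Fin (m+1)) ℤ := Matrix.updateRow (Matrix.of b) i a with hC
  have hCdet : C.det ≠ 0 := by
    intro h0
    apply hi
    have hmap := RingHom.map_det (Int.castRingHom ℚ) C
    have heq : (Int.castRingHom ℚ).mapMatrix C =
        (Matrix.of fun i' j => ((b i' j : ℚ))).updateRow i (fun j => (a j : ℚ)) := by
      funext k j
      by_cases hk : k = i <;>
        simp [hC, Matrix.updateRow_apply, hk]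
    rw [heq, h0] at hmap
    simpa using hmap.symm
  have hC1 : (1:ℝ) ≤ |((C.det : ℝ))| := by exact_mod_cast Int.one_le_abs hCdet
  set Cr : Matrix (Fin (m+1)) (Fin (m+1)) ℝ := Matrix.of fun k j => ((C k j : ℝ)) with hCr
  have hCrdet : Cr.det = ((C.det : ℝ)) := by
    have hmap := RingHom.map_det (Int.castRingHom ℝ) C
    have heq : (Int.castRingHom ℝ).mapMatrix C = Cr := by
      funext k j; simp [hCr]
    rw [heq] at hmap
    exact hmap.symm
  set v : Fin (m+1) → ℝ := fun k => ∑ j, x j • Cr k j with hv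
  have hvdet : (Cr.updateCol 0 v).det = Cr.det := by
    have h5 := Matrix.det_updateCol_sum Cr 0 x
    have hx0 : x 0 = 1 := by rw [hx]; exact Fin.cons_zero _ _
    simpa [hx0, hv] using h5
  have hvi : v i = 0 := by
    have hrow : ∀ j, Cr i j = ((a j : ℝ)) := fun j => by simp [hCr, hC]
    simpa [hv, hrow, smul_eq_mul, mul_comm] using hsum
  have hvk : ∀ k, k ≠ i → |v k| ≤ ε / (A:ℝ)^(m-1) := by
    intro k hk
    have hrow : ∀ j, Cr k j = ((b k j : ℝ)) := fun j => by
      simp [hCr, hC, Matrix.updateRow_ne hk]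
    have hb := hbound k
    simpa [hv, hrow, smul_eq_mul, mul_comm] using hb
  -- bound the minors
  have hminor : ∀ k : Fin (m+1), k ≠ i →
      |((Cr.updateCol 0 v).submatrix k.succAbove Fin.succ).det| ≤
        (m.factorial : ℝ) * (αr * (A:ℝ)^(m-1)) := by
    intro k hk
    obtain ⟨l₀, hl₀⟩ := Fin.exists_succAbove_eq (show i ≠ k from fun h' => hk h'.symm)
    set r : Fin m → ℝ := fun l => if k.succAbove l = i then αr else (A:ℝ) with hr
    have hentry : ∀ l j, |((Cr.updateCol 0 v).submatrix k.succAbove Fin.succ) l j| ≤ r l := by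
      intro l j
      rw [Matrix.submatrix_apply, Matrix.updateCol_ne (Fin.succ_ne_zero j)]
      by_cases hl : k.succAbove l = i
      · have he : Cr (k.succAbove l) j.succ = ((a j.succ : ℝ)) := by
          rw [hl]; simp [hCr, hC]
        rw [he, hr]
        simp only [hl, if_pos]
        exact hαb _
      · have he : Cr (k.succAbove l) j.succ = ((b (k.succAbove l) j.succ : ℝ)) := by
          simp [hCr, hC, Matrix.updateRow_ne hl]
        rw [he, hr]
        simp only [hl, if_neg, if_false]
        exact_mod_cast hAb _ _
    have hprod : ∏ l, r l = αr * (A:ℝ)^(m-1) := by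
      rw [← Finset.mul_prod_erase Finset.univ r (Finset.mem_univ l₀)]
      have h6 : r l₀ = αr := by simp [hr, hl₀]
      have h7 : ∀ l ∈ Finset.univ.erase l₀, r l = (A:ℝ) := by
        intro l hl
        have hne : k.succAbove l ≠ i := by
          intro he
          exact (Finset.mem_erase.mp hl).1
            (Fin.succAbove_right_injective (he.trans hl₀.symm))
        simp [hr, hne]
      rw [h6, Finset.prod_congr rfl h7, Finset.prod_const,
        Finset.card_erase_of_mem (Finset.mem_univ l₀), Finset.card_univ, Fintype.card_fin]
    calc |((Cr.updateCol 0 v).submatrix k.succAbove Fin.succ).det|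
        ≤ (m.factorial : ℝ) * ∏ l, r l := siegel_det_abs_le _ r hentry
      _ = (m.factorial : ℝ) * (αr * (A:ℝ)^(m-1)) := by rw [hprod]
  -- Laplace expansion and the final estimate
  have hexp := Matrix.det_succ_column_zero (Cr.updateCol 0 v)
  have hfinal : |(Cr.updateCol 0 v).det| ≤
      ((m+1):ℝ) * (ε / (A:ℝ)^(m-1) * ((m.factorial : ℝ) * (αr * (A:ℝ)^(m-1)))) := by
    rw [hexp]
    have hterm : ∀ k : Fin (m+1),
        |(-1:ℝ)^(k:ℕ) * (Cr.updateCol 0 v) k 0 *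
            ((Cr.updateCol 0 v).submatrix k.succAbove Fin.succ).det| ≤
          ε / (A:ℝ)^(m-1) * ((m.factorial : ℝ) * (αr * (A:ℝ)^(m-1))) := by
      intro k
      have hnn1 : (0:ℝ) ≤ ε / (A:ℝ)^(m-1) := div_nonneg hεpos.le hApow.le
      have hnn2 : (0:ℝ) ≤ (m.factorial : ℝ) * (αr * (A:ℝ)^(m-1)) :=
        mul_nonneg (Nat.cast_nonneg _) (mul_nonneg hα0.le hApow.le)
      have hcol : (Cr.updateCol 0 v) k 0 = v k := Matrix.updateCol_self
      rw [abs_mul, abs_mul, hcol, abs_pow, abs_neg, abs_one, one_pow, one_mul]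
      by_cases hk : k = i
      · rw [hk, hvi, abs_zero, zero_mul]
        exact mul_nonneg hnn1 hnn2
      · exact mul_le_mul (hvk k hk) (hminor k hk) (abs_nonneg _) hnn1
    calc |∑ k : Fin (m+1), (-1:ℝ)^(k:ℕ) * (Cr.updateCol 0 v) k 0 *
            ((Cr.updateCol 0 v).submatrix k.succAbove Fin.succ).det|
        ≤ ∑ k : Fin (m+1), |(-1:ℝ)^(k:ℕ) * (Cr.updateCol 0 v) k 0 *
            ((Cr.updateCol 0 v).submatrix k.succAbove Fin.succ).det| :=
          Finset.abs_sum_le_sum_abs _ _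
      _ ≤ ∑ _k : Fin (m+1), ε / (A:ℝ)^(m-1) * ((m.factorial : ℝ) * (αr * (A:ℝ)^(m-1))) :=
          Finset.sum_le_sum fun k _ => hterm k
      _ = ((m+1):ℝ) * (ε / (A:ℝ)^(m-1) * ((m.factorial : ℝ) * (αr * (A:ℝ)^(m-1)))) := by
          rw [Finset.sum_const, Finset.card_univ, Fintype.card_fin, nsmul_eq_mul]
          push_cast; ring
  -- derive the contradiction
  have hhalf : ((m+1):ℝ) * (ε / (A:ℝ)^(m-1) * ((m.factorial : ℝ) * (αr * (A:ℝ)^(m-1)))) =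
      1/2 := by
    have hfact : ((m+1).factorial : ℝ) = ((m+1):ℝ) * (m.factorial : ℝ) := by
      rw [Nat.factorial_succ]; push_cast; ring
    rw [hεdef, Nat.factorial_succ]
    push_cast
    field_simp
  rw [hvdet, hCrdet] at hfinal
  rw [hhalf] at hfinal
  linarith
end

section
/- In the setting of Siegel's criterion proof: if L(X) = a₀X₀ + ⋯ + a_mX_m is a nonzero linear form with integer coefficients, H = max_j |a_j|, and there exist m+1 linearly independent integer linear forms L₀,…,L_m with coefficients bounded by A satisfying max_i |L_i(1,θ)| ≤ ε/A^{m-1} for some ε < 1/(m!·mH), then L(1,θ₁,…,θ_m) ≠ 0. -/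
open Matrix Finset

/-- Row-wise Hadamard-type bound: if each entry in row `i` is bounded by `c i`,
then `|det M| ≤ k! * ∏ c i`. -/
lemma det_row_bound {k : ℕ} (M : Matrix (Fin k) (Fin k) ℝ) (c : Fin k → ℝ)
    (hc : ∀ i, 0 ≤ c i) (h : ∀ i j, |M i j| ≤ c i) :
    |M.det| ≤ (k.factorial : ℝ) * ∏ i, c i := by
  rw [Matrix.det_apply]
  calc |∑ σ : Equiv.Perm (Fin k), Equiv.Perm.sign σ • ∏ i, M (σ i) i|
      ≤ ∑ σ : Equiv.Perm (Fin k), |Equiv.Perm.sign σ • ∏ i, M (σ i) i| :=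
        Finset.abs_sum_le_sum_abs _ _
    _ ≤ ∑ _σ : Equiv.Perm (Fin k), ∏ i, c i := by
        refine Finset.sum_le_sum fun σ _ => ?_
        have h1 : |Equiv.Perm.sign σ • ∏ i, M (σ i) i| = |∏ i, M (σ i) i| := by
          rcases Int.units_eq_one_or (Equiv.Perm.sign σ) with hs | hs <;>
            simp [hs]
        rw [h1, Finset.abs_prod]
        calc ∏ i, |M (σ i) i| ≤ ∏ i, c (σ i) :=
              Finset.prod_le_prod (fun i _ => abs_nonneg _) (fun i _ => h (σ i) i)
          _ = ∏ i, c i := Equiv.prod_comp σ c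
    _ = (k.factorial : ℝ) * ∏ i, c i := by
        rw [Finset.sum_const, Finset.card_univ, Fintype.card_perm, Fintype.card_fin,
          nsmul_eq_mul]

theorem siegel_key_step (m : ℕ) (θ : Fin m → ℝ) (a : Fin (m + 1) → ℤ) (ha : a ≠ 0)
    (H : ℤ) (hH : H = Finset.univ.sup' Finset.univ_nonempty fun j => |a j|)
    (ε : ℝ) (hε0 : 0 < ε) (hε : ε < 1 / ((m.factorial : ℝ) * m * (H : ℝ)))
    (b : Fin (m + 1) → Fin (m + 1) → ℤ)
    (hdet : Matrix.det (fun i j => (b i j : ℚ)) ≠ 0)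
    (A : ℤ) (hA : A = Finset.univ.sup' Finset.univ_nonempty fun p : Fin (m + 1) × Fin (m + 1) => |b p.1 p.2|)
    (hbound : ∀ i : Fin (m + 1),
      |∑ j, (b i j : ℝ) * (Fin.cons 1 θ : Fin (m + 1) → ℝ) j| ≤ ε / (A : ℝ) ^ (m - 1)) :
    ∑ j, (a j : ℝ) * (Fin.cons 1 θ : Fin (m + 1) → ℝ) j ≠ 0 := by
  intro h0
  set v : Fin (m + 1) → ℝ := Fin.cons 1 θ with hv
  -- basic facts
  obtain ⟨j₀, hj₀⟩ : ∃ j, a j ≠ 0 := Function.ne_iff.mp ha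
  have hH1 : (1 : ℤ) ≤ H := by
    rw [hH]
    exact le_trans (Int.one_le_abs hj₀) (Finset.le_sup' (fun j => |a j|) (Finset.mem_univ j₀))
  have hHa : ∀ j, |a j| ≤ H := fun j => hH ▸ Finset.le_sup' (fun j => |a j|) (Finset.mem_univ j)
  have hbne : ∃ p : Fin (m + 1) × Fin (m + 1), b p.1 p.2 ≠ 0 := by
    by_contra hb
    push_neg at hb
    apply hdet
    have hz : (fun i j => ((b i j : ℚ))) = (0 : Matrix (Fin (m + 1)) (Fin (m + 1)) ℚ) := by
      ext i j
      simp [hb ⟨i, j⟩]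
    rw [hz]
    exact Matrix.det_zero
  obtain ⟨p₀, hp₀⟩ := hbne
  have hA1 : (1 : ℤ) ≤ A := by
    rw [hA]
    exact le_trans (Int.one_le_abs hp₀) (Finset.le_sup' (fun p : Fin (m + 1) × Fin (m + 1) => |b p.1 p.2|) (Finset.mem_univ p₀))
  have hAb : ∀ i j, |b i j| ≤ A := fun i j =>
    hA ▸ Finset.le_sup' (fun p : Fin (m + 1) × Fin (m + 1) => |b p.1 p.2|) (Finset.mem_univ (i, j))
  have hm : 1 ≤ m := by
    rcases Nat.eq_zero_or_pos m with hm0 | hm0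
    · subst hm0
      norm_num at hε
      linarith
    · exact hm0
  have hApow : (0 : ℝ) < (A : ℝ) ^ (m - 1) := by
    apply pow_pos
    exact_mod_cast lt_of_lt_of_le one_pos hA1
  -- the rational matrix
  set Bq : Matrix (Fin (m + 1)) (Fin (m + 1)) ℚ := Matrix.of fun i j => (b i j : ℚ) with hBq
  have hdetBq : Bq.det ≠ 0 := hdet
  have hunit : IsUnit Bq.det := isUnit_iff_ne_zero.mpr hdetBq
  set aq : Fin (m + 1) → ℚ := fun j => (a j : ℚ) with haq
  set c : Fin (m + 1) → ℚ := Matrix.vecMul aq Bq⁻¹ with hc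
  have hvc : Matrix.vecMul c Bq = aq := by
    rw [hc, Matrix.vecMul_vecMul, Matrix.nonsing_inv_mul Bq hunit, Matrix.vecMul_one]
  have hcne : c ≠ 0 := by
    intro hc0
    apply ha
    have : aq = 0 := by rw [← hvc, hc0, Matrix.zero_vecMul]
    funext j
    have h2 := congrFun this j
    simp only [haq, Pi.zero_apply] at h2
    exact_mod_cast h2
  obtain ⟨i₀, hi₀⟩ : ∃ i, c i ≠ 0 := Function.ne_iff.mp hcne
  -- replacing row i₀ by a keeps determinant nonzero
  have haqsum : aq = ∑ k, c k • Bq k := by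
    funext j
    have := congrFun hvc j
    rw [Matrix.vecMul] at this
    simp only [Finset.sum_apply, Pi.smul_apply, smul_eq_mul]
    rw [← this]
    simp [dotProduct]
  have hdetCq : (Bq.updateRow i₀ aq).det ≠ 0 := by
    rw [haqsum, Matrix.det_updateRow_sum]
    simp only [smul_eq_mul]
    exact mul_ne_zero hi₀ hdetBq
  -- the integer matrix and its determinant
  set Cz : Matrix (Fin (m + 1)) (Fin (m + 1)) ℤ := (Matrix.of b).updateRow i₀ a with hCz
  have hmapq : Cz.map (Int.cast : ℤ → ℚ) = Bq.updateRow i₀ aq := by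
    ext i j
    by_cases hi : i = i₀ <;>
      simp [hCz, hBq, haq, Matrix.map_apply, Matrix.updateRow_apply, hi]
  have hdetCz : Cz.det ≠ 0 := by
    intro hz
    apply hdetCq
    rw [← hmapq]
    have : Cz.map (Int.cast : ℤ → ℚ) = (Int.castRingHom ℚ).mapMatrix Cz := rfl
    rw [this, ← RingHom.map_det (Int.castRingHom ℚ), hz]
    simp
  have hdetCz1 : (1 : ℤ) ≤ |Cz.det| := Int.one_le_abs hdetCz
  -- over ℝ
  set Cr : Matrix (Fin (m + 1)) (Fin (m + 1)) ℝ := Cz.map (Int.cast : ℤ → ℝ) with hCr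
  have hdetCr : Cr.det = (Cz.det : ℝ) := by
    rw [hCr]
    have : Cz.map (Int.cast : ℤ → ℝ) = (Int.castRingHom ℝ).mapMatrix Cz := rfl
    rw [this, ← RingHom.map_det (Int.castRingHom ℝ)]
    rfl
  have hdetCr1 : (1 : ℝ) ≤ |Cr.det| := by
    rw [hdetCr]
    exact_mod_cast hdetCz1
  -- entries of Cr
  have hCr_row : ∀ j, Cr i₀ j = (a j : ℝ) := by
    intro j
    simp [hCr, hCz, Matrix.map_apply]
  have hCr_other : ∀ i, i ≠ i₀ → ∀ j, Cr i j = (b i j : ℝ) := by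
    intro i hi j
    simp [hCr, hCz, Matrix.map_apply, Matrix.updateRow_ne hi]
  -- column operation
  set D : Matrix (Fin (m + 1)) (Fin (m + 1)) ℝ :=
    Cr.updateCol 0 (fun k => ∑ i, v i • Cr k i) with hD
  have hdetD : D.det = Cr.det := by
    rw [hD, Matrix.det_updateCol_sum]
    have : v 0 = 1 := rfl
    rw [this, one_smul]
  have hdetD1 : (1 : ℝ) ≤ |D.det| := by rw [hdetD]; exact hdetCr1
  -- entries of D
  have hD0 : ∀ i, D i 0 = ∑ k, Cr i k * v k := by
    intro i
    rw [hD, Matrix.updateCol_self]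
    exact Finset.sum_congr rfl fun k _ => by rw [smul_eq_mul, mul_comm]
  have hDne : ∀ i (j : Fin (m + 1)), j ≠ 0 → D i j = Cr i j := by
    intro i j hj
    rw [hD, Matrix.updateCol_ne hj]
  have hDi₀ : D i₀ 0 = 0 := by
    rw [hD0]
    rw [← h0]
    exact Finset.sum_congr rfl fun k _ => by rw [hCr_row k]
  have hDother : ∀ i, i ≠ i₀ → |D i 0| ≤ ε / (A : ℝ) ^ (m - 1) := by
    intro i hi
    rw [hD0]
    have : ∑ k, Cr i k * v k = ∑ k, (b i k : ℝ) * v k :=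
      Finset.sum_congr rfl fun k _ => by rw [hCr_other i hi k]
    rw [this]
    exact hbound i
  -- bounds on entries used in minors
  have hHr : ∀ j, |(a j : ℝ)| ≤ (H : ℝ) := by
    intro j
    exact_mod_cast hHa j
  have hAr : ∀ i j, |(b i j : ℝ)| ≤ (A : ℝ) := by
    intro i j
    exact_mod_cast hAb i j
  have hH0 : (0 : ℝ) ≤ (H : ℝ) := by exact_mod_cast le_trans zero_le_one hH1
  have hA0 : (0 : ℝ) ≤ (A : ℝ) := by exact_mod_cast le_trans zero_le_one hA1
  -- minor bound for rows i ≠ i₀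
  have hminor : ∀ i : Fin (m + 1), i ≠ i₀ →
      |(D.submatrix i.succAbove Fin.succ).det| ≤
        (m.factorial : ℝ) * ((H : ℝ) * (A : ℝ) ^ (m - 1)) := by
    intro i hi
    set cb : Fin m → ℝ := fun r => if i.succAbove r = i₀ then (H : ℝ) else (A : ℝ) with hcb
    have hcb0 : ∀ r, 0 ≤ cb r := by
      intro r
      rw [hcb]
      dsimp only
      split <;> assumption
    have hent : ∀ r s, |(D.submatrix i.succAbove Fin.succ) r s| ≤ cb r := by
      intro r s
      rw [Matrix.submatrix_apply, hDne _ _ (Fin.succ_ne_zero s), hcb]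
      dsimp only
      by_cases hr : i.succAbove r = i₀
      · rw [if_pos hr, hr, hCr_row]
        exact hHr _
      · rw [if_neg hr, hCr_other _ hr]
        exact hAr _ _
    have hprod : ∏ r, cb r = (H : ℝ) * (A : ℝ) ^ (m - 1) := by
      obtain ⟨r₀, hr₀⟩ := Fin.exists_succAbove_eq (Ne.symm hi)
      rw [← Finset.mul_prod_erase Finset.univ cb (Finset.mem_univ r₀)]
      have h1 : cb r₀ = (H : ℝ) := by rw [hcb]; simp [hr₀]
      have h2 : ∏ r ∈ Finset.univ.erase r₀, cb r = (A : ℝ) ^ (m - 1) := by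
        rw [Finset.prod_congr rfl (fun r hr => ?_), Finset.prod_const,
          Finset.card_erase_of_mem (Finset.mem_univ r₀), Finset.card_univ, Fintype.card_fin]
        have hrne : r ≠ r₀ := Finset.ne_of_mem_erase hr
        rw [hcb]
        dsimp only
        rw [if_neg]
        intro hcon
        exact hrne (Fin.succAbove_right_injective (by rw [hcon, hr₀]))
      rw [h1, h2]
    calc |(D.submatrix i.succAbove Fin.succ).det|
        ≤ (m.factorial : ℝ) * ∏ r, cb r := det_row_bound _ cb hcb0 hent
      _ = (m.factorial : ℝ) * ((H : ℝ) * (A : ℝ) ^ (m - 1)) := by rw [hprod]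
  -- cofactor expansion
  have hexp : D.det = ∑ i : Fin (m + 1), (-1 : ℝ) ^ (i : ℕ) * D i 0 *
      (D.submatrix i.succAbove Fin.succ).det := Matrix.det_succ_column_zero D
  set K : ℝ := ε * (m.factorial : ℝ) * (H : ℝ) with hK
  have hterm : ∀ i : Fin (m + 1),
      |(-1 : ℝ) ^ (i : ℕ) * D i 0 * (D.submatrix i.succAbove Fin.succ).det| ≤
        if i = i₀ then 0 else K := by
    intro i
    by_cases hii : i = i₀
    · rw [if_pos hii, hii, hDi₀]
      simp
    · rw [if_neg hii, abs_mul, abs_mul, abs_pow, abs_neg, abs_one, one_pow, one_mul]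
      calc |D i 0| * |(D.submatrix i.succAbove Fin.succ).det|
          ≤ (ε / (A : ℝ) ^ (m - 1)) * ((m.factorial : ℝ) * ((H : ℝ) * (A : ℝ) ^ (m - 1))) := by
            apply mul_le_mul (hDother i hii) (hminor i hii) (abs_nonneg _)
            positivity
        _ = K := by
            rw [hK]
            field_simp
  have hsum : |D.det| ≤ (m : ℝ) * K := by
    rw [hexp]
    calc |∑ i : Fin (m + 1), (-1 : ℝ) ^ (i : ℕ) * D i 0 * (D.submatrix i.succAbove Fin.succ).det|
        ≤ ∑ i : Fin (m + 1), |(-1 : ℝ) ^ (i : ℕ) * D i 0 * (D.submatrix i.succAbove Fin.succ).det| :=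
          Finset.abs_sum_le_sum_abs _ _
      _ ≤ ∑ i : Fin (m + 1), if i = i₀ then 0 else K :=
          Finset.sum_le_sum fun i _ => hterm i
      _ = (m : ℝ) * K := by
          have hsplit : ∀ i : Fin (m + 1),
              (if i = i₀ then (0 : ℝ) else K) = K - (if i = i₀ then K else 0) := by
            intro i; split <;> ring
          rw [Finset.sum_congr rfl fun i _ => hsplit i, Finset.sum_sub_distrib,
            Finset.sum_const, Finset.sum_ite_eq' Finset.univ i₀ fun _ => K,
            if_pos (Finset.mem_univ i₀), Finset.card_univ, Fintype.card_fin,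
            nsmul_eq_mul]
          push_cast
          ring
  -- final contradiction
  have hP : (0 : ℝ) < (m.factorial : ℝ) * m * (H : ℝ) := by
    have h1 : (0 : ℝ) < (m.factorial : ℝ) := by positivity
    have h2 : (0 : ℝ) < (m : ℝ) := by exact_mod_cast hm
    have h3 : (0 : ℝ) < (H : ℝ) := by exact_mod_cast hH1
    positivity
  have hlt : ε * ((m.factorial : ℝ) * m * (H : ℝ)) < 1 := (lt_div_iff₀ hP).mp hε
  have : (m : ℝ) * K < 1 := by rw [hK]; nlinarith
  linarith
end

section
/- Dimension count via multiplication by a fixed polynomial: Let Q ∈ ℚ[X₁,…,X_t] be a nonzero polynomial of total degree ≤ δ vanishing at a point (θ₁,…,θ_t) ∈ ℝ^t. Then the ℚ-vector space spanned by the real numbers {θ₁^{i₁}⋯θ_t^{i_t} : i₁+⋯+i_t ≤ d}, for any integer d ≥ δ, has dimension at most C(t+d, t) − C(t+d−δ, t). -/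
open MvPolynomial

/-- Counting lemma: the number of exponent vectors with total degree ≤ n. -/
lemma card_sum_le (t n : ℕ) :
    Nat.card {f : Fin t →₀ ℕ // (f.sum fun _ e => e) ≤ n} = (t + n).choose t := by
  classical
  -- step 1: finsupp → functions
  have e1 : {f : Fin t →₀ ℕ // (f.sum fun _ e => e) ≤ n} ≃ {g : Fin t → ℕ // ∑ j, g j ≤ n} :=
    Finsupp.equivFunOnFinite.subtypeEquiv (fun f => by
      rw [Finsupp.sum_fintype _ _ (fun _ => rfl)]; rfl)
  -- step 2: add a slack variable
  have e2 : {g : Fin t → ℕ // ∑ j, g j ≤ n} ≃ {g : Fin (t+1) → ℕ // ∑ j, g j = n} :=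
    { toFun := fun g => ⟨Fin.snoc g.1 (n - ∑ j, g.1 j), by
        rw [Fin.sum_univ_castSucc]
        simp only [Fin.snoc_castSucc, Fin.snoc_last]
        omega⟩
      invFun := fun g => ⟨fun j => g.1 (Fin.castSucc j), by
        show ∑ j : Fin t, g.1 (Fin.castSucc j) ≤ n
        have h := g.2
        rw [Fin.sum_univ_castSucc] at h
        omega⟩
      left_inv := fun g => by
        ext j; simp [Fin.snoc_castSucc]
      right_inv := fun g => by
        ext j
        refine Fin.lastCases ?_ (fun i => ?_) j
        · have := g.2
          rw [Fin.sum_univ_castSucc] at this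
          simp only [Fin.snoc_last]
          omega
        · simp [Fin.snoc_castSucc] }
  -- step 3: functions → finsupps → multisets
  have e3a : {g : Fin (t+1) → ℕ // ∑ j, g j = n} ≃
      {f : Fin (t+1) →₀ ℕ // (f.sum fun _ e => e) = n} :=
    Finsupp.equivFunOnFinite.symm.subtypeEquiv (fun g => by
      rw [Finsupp.sum_fintype _ _ (fun _ => rfl)]
      exact Iff.rfl)
  have e3b : {f : Fin (t+1) →₀ ℕ // (f.sum fun _ e => e) = n} ≃ Sym (Fin (t+1)) n :=
    Finsupp.orderIsoMultiset.toEquiv.subtypeEquiv (fun f => by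
      show (f.sum fun _ e => e) = n ↔ Multiset.card f.toMultiset = n
      rw [Finsupp.card_toMultiset]
      exact Iff.rfl)
  have e3 := e3a.trans e3b
  rw [Nat.card_congr ((e1.trans e2).trans e3), Nat.card_eq_fintype_card,
    Sym.card_sym_eq_choose, Fintype.card_fin]
  have h1 : t + 1 + n - 1 = t + n := by omega
  rw [h1, ← Nat.choose_symm_add]

set_option maxHeartbeats 1600000 in
set_option synthInstance.maxHeartbeats 1000000 in
theorem dimension_count_via_multiplication (t : ℕ) (θ : Fin t → ℝ)
    (δ d : ℕ) (hdδ : δ ≤ d)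
    (Q : MvPolynomial (Fin t) ℚ) (hQ : Q ≠ 0) (hQdeg : Q.totalDegree ≤ δ)
    (hQθ : MvPolynomial.aeval θ Q = 0) :
    Module.finrank ℚ (Submodule.span ℚ
        {x : ℝ | ∃ i : Fin t → ℕ, (∑ j, i j ≤ d) ∧ x = ∏ j, θ j ^ i j}) ≤
      (t + d).choose t - (t + d - δ).choose t := by
  classical
  haveI : Module.Finite ℚ (MvPolynomial.restrictTotalDegree (Fin t) ℚ d) := inferInstance
  haveI : Module.Finite ℚ (LinearMap.ker ((MvPolynomial.aeval θ).toLinearMap ∘ₗ (MvPolynomial.restrictTotalDegree (Fin t) ℚ d).subtype)) := inferInstance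
  haveI : Module.Finite ℚ (LinearMap.range ((MvPolynomial.aeval θ).toLinearMap ∘ₗ (MvPolynomial.restrictTotalDegree (Fin t) ℚ d).subtype)) := inferInstance
  -- the span is contained in the range of ((MvPolynomial.aeval θ).toLinearMap ∘ₗ (MvPolynomial.restrictTotalDegree (Fin t) ℚ d).subtype)
  have hspan : Submodule.span ℚ
      {x : ℝ | ∃ i : Fin t → ℕ, (∑ j, i j ≤ d) ∧ x = ∏ j, θ j ^ i j} ≤ LinearMap.range ((MvPolynomial.aeval θ).toLinearMap ∘ₗ (MvPolynomial.restrictTotalDegree (Fin t) ℚ d).subtype) := by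
    rw [Submodule.span_le]
    rintro x ⟨i, hi, rfl⟩
    refine ⟨⟨MvPolynomial.monomial (Finsupp.equivFunOnFinite.symm i) 1, ?_⟩, ?_⟩
    · rw [MvPolynomial.mem_restrictTotalDegree]
      refine le_trans (MvPolynomial.totalDegree_monomial_le _ _) ?_
      rw [Finsupp.sum_fintype _ _ (fun _ => rfl)]
      simpa using hi
    · show MvPolynomial.aeval θ (MvPolynomial.monomial (Finsupp.equivFunOnFinite.symm i) (1:ℚ))
        = ∏ j, θ j ^ i j
      rw [MvPolynomial.aeval_monomial, map_one, one_mul,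
        Finsupp.prod_fintype _ _ (fun _ => pow_zero _)]
      simp
  -- a linearly independent family in the kernel of ((MvPolynomial.aeval θ).toLinearMap ∘ₗ (MvPolynomial.restrictTotalDegree (Fin t) ℚ d).subtype)
  have hmemW : ∀ j : {j : Fin t →₀ ℕ // (j.sum fun _ e => e) ≤ d - δ},
      Q * MvPolynomial.monomial j.1 (1 : ℚ) ∈ MvPolynomial.restrictTotalDegree (Fin t) ℚ d := by
    intro j
    rw [MvPolynomial.mem_restrictTotalDegree]
    refine le_trans (MvPolynomial.totalDegree_mul _ _) ?_
    have h2 : (MvPolynomial.monomial j.1 (1 : ℚ)).totalDegree ≤ d - δ :=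
      le_trans (MvPolynomial.totalDegree_monomial_le _ _) j.2
    omega
  have hindep0 : LinearIndependent ℚ
      (fun j : {j : Fin t →₀ ℕ // (j.sum fun _ e => e) ≤ d - δ} =>
        Q * MvPolynomial.monomial j.1 (1 : ℚ)) := by
    have hmono : LinearIndependent ℚ
        (fun j : {j : Fin t →₀ ℕ // (j.sum fun _ e => e) ≤ d - δ} =>
          MvPolynomial.monomial j.1 (1 : ℚ)) :=
      (MvPolynomial.basisMonomials (Fin t) ℚ).linearIndependent.comp
        Subtype.val Subtype.val_injective
    have hinj : Function.Injective (LinearMap.mulLeft ℚ Q) := fun a b h => by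
      simpa [LinearMap.mulLeft_apply] using mul_left_cancel₀ hQ h
    exact hmono.map' (LinearMap.mulLeft ℚ Q) (LinearMap.ker_eq_bot.mpr hinj)
  -- finiteness and cardinality of the index type
  have hcard : Nat.card {j : Fin t →₀ ℕ // (j.sum fun _ e => e) ≤ d - δ}
      = (t + d - δ).choose t := by
    rw [card_sum_le]
    congr 1
    omega
  haveI hfin : Finite {j : Fin t →₀ ℕ // (j.sum fun _ e => e) ≤ d - δ} :=
    (Nat.card_pos_iff.mp (by rw [hcard]; exact Nat.choose_pos (by omega))).2
  haveI : Fintype {j : Fin t →₀ ℕ // (j.sum fun _ e => e) ≤ d - δ} := Fintype.ofFinite _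
  -- the span of the products, inside the polynomial ring
  have hK'rank : Module.finrank ℚ (Submodule.span ℚ (Set.range
      (fun j : {j : Fin t →₀ ℕ // (j.sum fun _ e => e) ≤ d - δ} =>
        Q * MvPolynomial.monomial j.1 (1 : ℚ)))) = (t + d - δ).choose t := by
    rw [finrank_span_eq_card hindep0, ← Nat.card_eq_fintype_card, hcard]
  have hK'W : Submodule.span ℚ (Set.range
      (fun j : {j : Fin t →₀ ℕ // (j.sum fun _ e => e) ≤ d - δ} =>
        Q * MvPolynomial.monomial j.1 (1 : ℚ))) ≤
      MvPolynomial.restrictTotalDegree (Fin t) ℚ d := by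
    rw [Submodule.span_le]
    rintro p ⟨j, rfl⟩
    exact hmemW j
  have hK'ker : Submodule.span ℚ (Set.range
      (fun j : {j : Fin t →₀ ℕ // (j.sum fun _ e => e) ≤ d - δ} =>
        Q * MvPolynomial.monomial j.1 (1 : ℚ))) ≤
      LinearMap.ker (MvPolynomial.aeval θ).toLinearMap := by
    rw [Submodule.span_le]
    rintro p ⟨j, rfl⟩
    rw [SetLike.mem_coe, LinearMap.mem_ker]
    show MvPolynomial.aeval θ (Q * MvPolynomial.monomial j.1 (1:ℚ)) = 0
    rw [map_mul, hQθ, zero_mul]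
  have hkercomp : LinearMap.ker ((MvPolynomial.aeval θ).toLinearMap ∘ₗ (MvPolynomial.restrictTotalDegree (Fin t) ℚ d).subtype) =
      Submodule.comap (MvPolynomial.restrictTotalDegree (Fin t) ℚ d).subtype
        (LinearMap.ker (MvPolynomial.aeval θ).toLinearMap) :=
    LinearMap.ker_comp _ _
  have hker : (t + d - δ).choose t ≤ Module.finrank ℚ (LinearMap.ker ((MvPolynomial.aeval θ).toLinearMap ∘ₗ (MvPolynomial.restrictTotalDegree (Fin t) ℚ d).subtype)) := by
    have e : Module.finrank ℚ
        (Submodule.comap (MvPolynomial.restrictTotalDegree (Fin t) ℚ d).subtype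
          (Submodule.span ℚ (Set.range
            (fun j : {j : Fin t →₀ ℕ // (j.sum fun _ e => e) ≤ d - δ} =>
              Q * MvPolynomial.monomial j.1 (1 : ℚ)))))
        = Module.finrank ℚ (Submodule.span ℚ (Set.range
            (fun j : {j : Fin t →₀ ℕ // (j.sum fun _ e => e) ≤ d - δ} =>
              Q * MvPolynomial.monomial j.1 (1 : ℚ)))) :=
      LinearEquiv.finrank_eq (Submodule.comapSubtypeEquivOfLe hK'W)
    rw [hkercomp]
    refine le_trans (le_of_eq ?_) (Submodule.finrank_mono (Submodule.comap_mono hK'ker))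
    rw [e, hK'rank]
  -- rank-nullity
  have hrn := LinearMap.finrank_range_add_finrank_ker ((MvPolynomial.aeval θ).toLinearMap ∘ₗ (MvPolynomial.restrictTotalDegree (Fin t) ℚ d).subtype)
  have hWrank : Module.finrank ℚ (MvPolynomial.restrictTotalDegree (Fin t) ℚ d)
      = (t + d).choose t := by
    have hb := Module.finrank_eq_nat_card_basis
      (MvPolynomial.basisRestrictSupport ℚ {n : Fin t →₀ ℕ | (n.sum fun _ e => e) ≤ d})
    have : Module.finrank ℚ
        (MvPolynomial.restrictSupport ℚ {n : Fin t →₀ ℕ | (n.sum fun _ e => e) ≤ d})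
        = (t + d).choose t := by
      rw [hb]; exact card_sum_le t d
    exact this
  have hmain : Module.finrank ℚ (Submodule.span ℚ
      {x : ℝ | ∃ i : Fin t → ℕ, (∑ j, i j ≤ d) ∧ x = ∏ j, θ j ^ i j}) ≤
      Module.finrank ℚ (LinearMap.range ((MvPolynomial.aeval θ).toLinearMap ∘ₗ (MvPolynomial.restrictTotalDegree (Fin t) ℚ d).subtype)) := Submodule.finrank_mono hspan
  exact hmain.trans (Nat.le_sub_of_add_le
    (by rw [← hWrank, ← hrn]; exact Nat.add_le_add_left hker _))
end
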